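/- Consider the single-arm MDP (the 'slow-and-steady' problem) with states {Steady, Brief, End, U-Steady, U-Brief, Pre-Steady}, deterministic and ε-perturbed transitions as specified, rewards r(Steady,1)=α, r(Brief,1)=β, all others 0, discount γ = 1−ε, with 0 < (1 + 1/γ²)α < β < γα/(1−γ). With Lagrangian penalty λ = α, the optimal single-arm value functions satisfy V_λ(U-Steady) = γ(γ²(β−α) − α) and V_λ(U-Brief) = γ²(β−α) − α, so idling is optimal in U-Steady while pulling is optimal in U-Brief. -/
import Mathlib


/-- In the slow-and-steady single-arm MDP with Lagrangian penalty
`λ = α`, the value functions (characterized by their Bellman equations) satisfy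
`V(U-Steady) = γ(γ²(β−α)−α)` and `V(U-Brief) = γ²(β−α)−α`; idling attains the
maximum in U-Steady while pulling attains it in U-Brief. -/
theorem stmt_10 (α β γ ε VUS VUB : ℝ)
    (hε : ε = 1 - γ) (hγ0 : 7 / 8 < γ) (hγ1 : γ < 1)
    (hα : 0 < (1 + 1 / γ ^ 2) * α) (hβ1 : (1 + 1 / γ ^ 2) * α < β)
    (hβ2 : β < γ * α / (1 - γ))
    (hUS : VUS = max (γ * VUB) (-α))
    (hUB : VUB = max (γ * VUS) (-α + γ * (1 - ε) * (β - α))) :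
    VUS = γ * (γ ^ 2 * (β - α) - α) ∧ VUB = γ ^ 2 * (β - α) - α ∧
    VUS = γ * VUB ∧ VUB = -α + γ * (1 - ε) * (β - α) := by
  subst hε
  have hγpos : 0 < γ := by linarith
  have hγ2 : (0:ℝ) < γ ^ 2 := by positivity
  have hf : (γ ^ 2 + 1) * α = γ ^ 2 * ((1 + 1 / γ ^ 2) * α) := by
    field_simp
  have hα' : 0 < (γ ^ 2 + 1) * α := by rw [hf]; positivity
  have hαpos : 0 < α := by nlinarith [sq_nonneg γ]
  have hee : 1 - (1 - γ) = γ := by ring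
  rw [hee] at hUB ⊢
  set c : ℝ := -α + γ * γ * (β - α) with hcdef
  have hc : 0 < c := by
    have h := mul_lt_mul_of_pos_left hβ1 hγ2
    rw [← hf] at h
    nlinarith
  have hVUBc : c ≤ VUB := by rw [hUB]; exact le_max_right _ _
  have hVUB : VUB = c := by
    rcases le_or_gt (γ * VUS) c with h | h
    · rw [hUB, max_eq_right h]
    · have hVUB' : VUB = γ * VUS := by rw [hUB, max_eq_left h.le]
      rcases max_choice (γ * VUB) (-α) with h2 | h2 <;> rw [h2] at hUS
      · -- VUS = γ VUB ⇒ VUB = γ² VUB ⇒ VUB = 0 < c ≤ VUB, contradiction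
        rw [hUS] at hVUB'
        have h0 : (1 - γ * γ) * VUB = 0 := by linear_combination hVUB'
        nlinarith [mul_pos (show (0:ℝ) < 1 - γ * γ by nlinarith)
          (lt_of_lt_of_le hc hVUBc)]
      · rw [hUS] at hVUB'
        nlinarith
  have hVUS : VUS = γ * c := by
    rw [hUS, hVUB]
    exact max_eq_left (by nlinarith)
  refine ⟨?_, ?_, ?_, ?_⟩
  · rw [hVUS]; ring
  · rw [hVUB]; ring
  · rw [hVUS, hVUB]
  · rw [hVUB]
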